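/- If R and R' are commutative rings with R' an integral domain, and φ : Mₙ(R) → Mₙ'(R') is an injective ring homomorphism, then n ≤ n'. -/
import Mathlib

private def nilJordan (R : Type*) [CommRing R] (n : ℕ) : Matrix (Fin n) (Fin n) R :=
  Matrix.of fun i j => if (i : ℕ) + 1 = (j : ℕ) then 1 else 0

private lemma nilJordan_pow (R : Type*) [CommRing R] (n k : ℕ) (i j : Fin n) :
    ((nilJordan R n) ^ k) i j = if (i : ℕ) + k = (j : ℕ) then 1 else 0 := by
  induction k generalizing j with
  | zero => simp [Matrix.one_apply, Fin.ext_iff, eq_comm]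
  | succ k ih =>
    rw [pow_succ, Matrix.mul_apply]
    simp only [ih]
    simp only [nilJordan, Matrix.of_apply]
    rcases lt_or_ge ((i : ℕ) + k) n with h | h
    · rw [Finset.sum_eq_single (⟨(i : ℕ) + k, h⟩ : Fin n)]
      · simp [← Nat.add_assoc]
      · intro b _ hb
        rw [if_neg fun hc => hb (Fin.ext hc.symm), zero_mul]
      · simp
    · have h1 : ∀ b : Fin n, (i : ℕ) + k ≠ (b : ℕ) := fun b hb => absurd (hb ▸ b.isLt) (not_lt.2 h)
      have h2 : (i : ℕ) + (k + 1) ≠ (j : ℕ) := by omega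
      simp [h1, h2]

private lemma nilJordan_pow_eq_zero (R : Type*) [CommRing R] (n : ℕ) :
    (nilJordan R n) ^ n = 0 := by
  ext i j
  rw [nilJordan_pow]
  have : (i : ℕ) + n ≠ (j : ℕ) := by have := j.isLt; omega
  simp [this]

/-- If `R` and `R'` are commutative rings (`R` nonzero) with `R'` an integral domain, and
`φ : Mₙ(R) → Mₙ'(R')` is an injective ring homomorphism, then `n ≤ n'`. -/
theorem matrix_ringHom_injective_le {R R' : Type*} [CommRing R] [Nontrivial R]
    [CommRing R'] [IsDomain R'] {n n' : ℕ}
    (φ : Matrix (Fin n) (Fin n) R →+* Matrix (Fin n') (Fin n') R')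
    (hφ : Function.Injective φ) : n ≤ n' := by
  by_contra hlt
  push_neg at hlt
  set a := nilJordan R n with ha
  have han : a ^ n = 0 := nilJordan_pow_eq_zero R n
  -- φ a is nilpotent
  have hnil : IsNilpotent (φ a) := ⟨n, by rw [← map_pow, han, map_zero]⟩
  -- over a domain, nilpotent matrix to the card power is zero
  have hch : (φ a).charpoly = Polynomial.X ^ (Fintype.card (Fin n')) := by
    have := Matrix.isNilpotent_charpoly_sub_pow_of_isNilpotent hnil
    rw [isNilpotent_iff_eq_zero, sub_eq_zero] at this
    exact this
  have hpow : (φ a) ^ n' = 0 := by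
    have := Matrix.aeval_self_charpoly (φ a)
    rw [hch] at this
    simpa using this
  -- hence a ^ (n-1) = 0
  have h1 : φ (a ^ (n - 1)) = 0 := by
    rw [map_pow]
    have : n - 1 = n' + (n - 1 - n') := by omega
    rw [this, pow_add, hpow, zero_mul]
  have h2 : a ^ (n - 1) = 0 := hφ (by rw [h1, map_zero])
  -- but the (0, n-1) entry is 1
  have hn : 0 < n := by omega
  have := congrFun (congrFun h2 ⟨0, hn⟩) ⟨n - 1, by omega⟩
  rw [nilJordan_pow] at this
  simp at this
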